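/- Let K be a field and S_1 = K⟨x, y | yx = 1⟩. Then the element y - 1 is a regular element of S_1. -/

import Mathlib

/-- The bicyclic monoid: pairs `(i,j)` thought of as `x^i y^j` with `y * x = 1`. -/
@[ext] structure Bi where
  i : ℕ
  j : ℕ
deriving DecidableEq

namespace Bi

protected def mul (a b : Bi) : Bi := ⟨a.i + (b.i - a.j), b.j + (a.j - b.i)⟩

instance : Monoid Bi where
  mul := Bi.mul
  one := ⟨0, 0⟩
  mul_assoc a b c := by
    show Bi.mul (Bi.mul a b) c = Bi.mul a (Bi.mul b c)
    simp only [Bi.mul, Bi.mk.injEq]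
    omega
  one_mul := by
    rintro ⟨ai, aj⟩
    show Bi.mul ⟨0,0⟩ ⟨ai,aj⟩ = ⟨ai,aj⟩
    simp only [Bi.mul, Bi.mk.injEq]
    omega
  mul_one := by
    rintro ⟨ai, aj⟩
    show Bi.mul ⟨ai,aj⟩ ⟨0,0⟩ = ⟨ai,aj⟩
    simp only [Bi.mul, Bi.mk.injEq]
    omega

lemma mul_def (a b : Bi) : a * b = ⟨a.i + (b.i - a.j), b.j + (a.j - b.i)⟩ := rfl

lemma one_def : (1 : Bi) = ⟨0, 0⟩ := rfl

end Bi

/-- Defining relation `y * x = 1` for the algebra of one-sided inverses `S₁(R)`. -/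
inductive S1Rel (R : Type) [CommRing R] : FreeAlgebra R Bool → FreeAlgebra R Bool → Prop
  | rel : S1Rel R (FreeAlgebra.ι R false * FreeAlgebra.ι R true) 1

/-- `S₁(R) = R⟨x, y | yx = 1⟩`, the algebra of one-sided inverses of `R[x]`. -/
abbrev S1 (R : Type) [CommRing R] := RingQuot (S1Rel R)

/-- The generator `x` of `S₁(R)`. -/
noncomputable def S1.x (R : Type) [CommRing R] : S1 R :=
  RingQuot.mkRingHom (S1Rel R) (FreeAlgebra.ι R true)

/-- The generator `y` of `S₁(R)`. -/
noncomputable def S1.y (R : Type) [CommRing R] : S1 R :=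
  RingQuot.mkRingHom (S1Rel R) (FreeAlgebra.ι R false)

section Homs

variable (K : Type) [Field K]

lemma S1.y_mul_x : S1.y K * S1.x K = 1 := by
  rw [S1.x, S1.y, ← map_mul]
  exact (RingQuot.mkRingHom_rel (S1Rel.rel (R := K))).trans (map_one _)

lemma S1.y_mul_x_pow (k : ℕ) : S1.y K * S1.x K ^ (k + 1) = S1.x K ^ k := by
  induction k with
  | zero => simpa using S1.y_mul_x K
  | succ k ih =>
    rw [pow_succ, ← mul_assoc, ih, ← pow_succ]

lemma S1.ypow_mul_xpow (j k : ℕ) :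
    S1.y K ^ j * S1.x K ^ k = S1.x K ^ (k - j) * S1.y K ^ (j - k) := by
  induction j generalizing k with
  | zero => simp
  | succ j ih =>
    cases k with
    | zero => simp
    | succ k =>
      rw [pow_succ, mul_assoc, S1.y_mul_x_pow, ih]
      congr 1 <;> congr 1 <;> omega

/-- The monoid homomorphism from the bicyclic monoid to `S₁`. -/
noncomputable def biHom : Bi →* S1 K where
  toFun a := S1.x K ^ a.i * S1.y K ^ a.j
  map_one' := by simp [Bi.one_def]
  map_mul' a b := by
    simp only [Bi.mul_def]
    rw [mul_assoc, ← mul_assoc (S1.y K ^ a.j), S1.ypow_mul_xpow,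
      mul_assoc (S1.x K ^ (b.i - a.j)), ← pow_add, ← mul_assoc, ← pow_add, Nat.add_comm b.j]

/-- The algebra map `MonoidAlgebra K Bi →ₐ S₁ K`. -/
noncomputable def fromBi : MonoidAlgebra K Bi →ₐ[K] S1 K :=
  MonoidAlgebra.lift K (S1 K) Bi (biHom K)

/-- The algebra map `S₁ K →ₐ MonoidAlgebra K Bi`. -/
noncomputable def toBi : S1 K →ₐ[K] MonoidAlgebra K Bi :=
  RingQuot.liftAlgHom K ⟨FreeAlgebra.lift K fun b =>
      if b then MonoidAlgebra.single ⟨1,0⟩ 1 else MonoidAlgebra.single ⟨0,1⟩ 1, by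
    rintro _ _ ⟨⟩
    rw [map_mul, map_one, FreeAlgebra.lift_ι_apply, FreeAlgebra.lift_ι_apply]
    simp only [if_true, if_false, Bool.false_eq_true]
    rw [MonoidAlgebra.single_mul_single, one_mul]
    rfl⟩

lemma fromBi_single (g : Bi) : fromBi K (MonoidAlgebra.single g (1 : K)) = biHom K g := by
  rw [fromBi, MonoidAlgebra.lift_single, one_smul]

lemma toBi_y : toBi K (S1.y K) = MonoidAlgebra.single ⟨0,1⟩ 1 := by
  rw [S1.y, toBi, ← RingQuot.mkAlgHom_coe K, RingHom.coe_coe,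
    RingQuot.liftAlgHom_mkAlgHom_apply, FreeAlgebra.lift_ι_apply, if_neg]
  simp

lemma fromBi_toBi (z : S1 K) : fromBi K (toBi K z) = z := by
  have : (fromBi K).comp (toBi K) = AlgHom.id K (S1 K) := by
    apply RingQuot.ringQuot_ext'
    apply FreeAlgebra.hom_ext
    funext b
    simp only [Function.comp_apply, AlgHom.coe_comp, AlgHom.coe_id, id_eq]
    rw [toBi, RingQuot.liftAlgHom_mkAlgHom_apply, FreeAlgebra.lift_ι_apply]
    cases b with
    | true =>
      rw [if_pos rfl, fromBi_single]
      show S1.x K ^ 1 * S1.y K ^ 0 = _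
      rw [pow_one, pow_zero, mul_one, S1.x, ← RingQuot.mkAlgHom_coe K, RingHom.coe_coe]
    | false =>
      rw [if_neg (by simp), fromBi_single]
      show S1.x K ^ 0 * S1.y K ^ 1 = _
      rw [pow_one, pow_zero, one_mul, S1.y, ← RingQuot.mkAlgHom_coe K, RingHom.coe_coe]
  exact congrArg (fun f : S1 K →ₐ[K] S1 K => f z) this

lemma toBi_injective : Function.Injective (toBi K) := by
  intro a b h
  have := congrArg (fromBi K) h
  rwa [fromBi_toBi, fromBi_toBi] at this

end Homs

section Cancel

variable {K : Type} [Field K]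

/-- If `a * y = a` in the bicyclic monoid algebra, then `a = 0`. -/
lemma right_cancel_aux (a : MonoidAlgebra K Bi)
    (h : a * MonoidAlgebra.single ⟨0,1⟩ 1 = a) : a = 0 := by
  have hstep : ∀ i j : ℕ, a.coeff ⟨i, j + 1⟩ = a.coeff ⟨i, j⟩ := by
    intro i j
    have H : ∀ b : Bi, b * (⟨0,1⟩ : Bi) = ⟨i, j+1⟩ ↔ b = ⟨i, j⟩ := by
      rintro ⟨bi, bj⟩
      simp only [Bi.mul_def, Bi.mk.injEq]
      omega
    conv_lhs => rw [← h]
    rw [MonoidAlgebra.coeff_mul_single_eq_coeff_mul _ (fun b _ => H b), mul_one]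
  have hzero : ∀ i : ℕ, a.coeff ⟨i, 0⟩ = 0 := by
    intro i
    conv_lhs => rw [← h]
    apply MonoidAlgebra.mul_single_apply_of_not_exists_mul
    rintro ⟨⟨di, dj⟩, hd⟩
    have := congrArg Bi.j hd
    simp only [Bi.mul_def] at this
    omega
  have : ∀ j i : ℕ, a.coeff ⟨i, j⟩ = 0 := by
    intro j
    induction j with
    | zero => exact hzero
    | succ j ih => intro i; rw [hstep i j]; exact ih i
  apply MonoidAlgebra.ext
  apply Finsupp.ext
  rintro ⟨gi, gj⟩
  exact this gj gi

/-- If `y * a = a` in the bicyclic monoid algebra, then `a = 0`. -/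
lemma left_cancel_aux (a : MonoidAlgebra K Bi)
    (h : MonoidAlgebra.single ⟨0,1⟩ 1 * a = a) : a = 0 := by
  classical
  have hstep : ∀ m j : ℕ, 1 ≤ m → a.coeff ⟨m, j⟩ = a.coeff ⟨m + 1, j⟩ := by
    intro m j hm
    have H : ∀ b : Bi, (⟨0,1⟩ : Bi) * b = ⟨m, j⟩ ↔ b = ⟨m + 1, j⟩ := by
      rintro ⟨bi, bj⟩
      simp only [Bi.mul_def, Bi.mk.injEq]
      omega
    conv_lhs => rw [← h]
    rw [MonoidAlgebra.coeff_single_mul_eq_mul_coeff _ (fun b _ => H b), one_mul]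
  have hpos : ∀ i j : ℕ, a.coeff ⟨i + 1, j⟩ = 0 := by
    intro i j
    have key : ∀ n : ℕ, a.coeff ⟨i + 1, j⟩ = a.coeff ⟨i + 1 + n, j⟩ := by
      intro n
      induction n with
      | zero => rfl
      | succ n ih => exact ih.trans (hstep (i + 1 + n) j (by omega))
    rw [key (a.coeff.support.sup Bi.i)]
    by_contra hne
    have hle : (⟨i + 1 + a.coeff.support.sup Bi.i, j⟩ : Bi).i ≤ a.coeff.support.sup Bi.i :=
      Finset.le_sup (Finsupp.mem_support_iff.mpr hne)
    simp only at hle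
    omega
  have h00 : a.coeff ⟨0, 0⟩ = 0 := by
    have H : ∀ b : Bi, (⟨0,1⟩ : Bi) * b = ⟨0, 0⟩ ↔ b = ⟨1, 0⟩ := by
      rintro ⟨bi, bj⟩
      simp only [Bi.mul_def, Bi.mk.injEq]
      omega
    conv_lhs => rw [← h]
    rw [MonoidAlgebra.coeff_single_mul_eq_mul_coeff _ (fun b _ => H b), one_mul]
    exact hpos 0 0
  have hzero : ∀ j : ℕ, a.coeff ⟨0, j⟩ = 0 := by
    intro j
    induction j with
    | zero => exact h00
    | succ j ih =>
      have key : (MonoidAlgebra.single (⟨0,1⟩ : Bi) (1:K) * a).coeff ⟨0, j + 1⟩ = a.coeff ⟨0, j⟩ := by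
        rw [MonoidAlgebra.coeff_mul, MonoidAlgebra.coeff_single, Finsupp.sum_single_index (by
          simp only [zero_mul, ite_self]
          exact Finset.sum_const_zero)]
        rw [Finsupp.sum]
        rw [Finset.sum_eq_single (⟨0, j⟩ : Bi)]
        · have hc : (⟨0,1⟩ : Bi) * (⟨0, j⟩ : Bi) = ⟨0, j + 1⟩ := by
            simp [Bi.mul_def]
          rw [if_pos hc, one_mul]
        · rintro ⟨bi, bj⟩ hb hne
          by_cases hc : (⟨0,1⟩ : Bi) * (⟨bi, bj⟩ : Bi) = ⟨0, j + 1⟩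
          · have : (bi = 0 ∧ bj = j) ∨ (bi = 1 ∧ bj = j + 1) := by
              simp only [Bi.mul_def, Bi.mk.injEq] at hc
              omega
            rcases this with ⟨h1, h2⟩ | ⟨h1, h2⟩
            · exact absurd (by rw [h1, h2]) hne
            · exfalso
              apply Finsupp.mem_support_iff.mp hb
              rw [h1, h2]
              exact hpos 0 (j + 1)
          · rw [if_neg hc]
        · intro hns
          have := Finsupp.notMem_support_iff.mp hns
          simp [this]
      rw [h] at key
      rw [key]
      exact ih
  apply MonoidAlgebra.ext
  apply Finsupp.ext
  rintro ⟨gi, gj⟩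
  cases gi with
  | zero => exact hzero gj
  | succ n => exact hpos n gj

end Cancel

/-- Let `K` be a field and `S₁ = K⟨x, y | yx = 1⟩`. Then `y - 1` is a regular element of
`S₁`: left and right multiplication by `y - 1` are injective. -/
theorem S1.y_sub_one_regular (K : Type) [Field K] :
    Function.Injective (fun a : S1 K => (S1.y K - 1) * a) ∧
    Function.Injective (fun a : S1 K => a * (S1.y K - 1)) := by
  constructor
  · intro a b hab
    have h : (S1.y K - 1) * (a - b) = 0 := by
      rw [mul_sub, sub_eq_zero]
      exact hab
    have h2 : S1.y K * (a - b) = a - b := by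
      rw [sub_mul, one_mul, sub_eq_zero] at h
      exact h
    have h3 : MonoidAlgebra.single (⟨0,1⟩ : Bi) (1:K) * toBi K (a - b) = toBi K (a - b) := by
      rw [← toBi_y, ← map_mul, h2]
    have h5 : a - b = 0 := toBi_injective K (by rw [left_cancel_aux _ h3, map_zero])
    exact sub_eq_zero.mp h5
  · intro a b hab
    have h : (a - b) * (S1.y K - 1) = 0 := by
      rw [sub_mul, sub_eq_zero]
      exact hab
    have h2 : (a - b) * S1.y K = a - b := by
      rw [mul_sub, mul_one, sub_eq_zero] at h
      exact h
    have h3 : toBi K (a - b) * MonoidAlgebra.single (⟨0,1⟩ : Bi) (1:K) = toBi K (a - b) := by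
      rw [← toBi_y, ← map_mul, h2]
    have h5 : a - b = 0 := toBi_injective K (by rw [right_cancel_aux _ h3, map_zero])
    exact sub_eq_zero.mp h5
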